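/- Let L be a 2-step nilpotent Lie algebra over a field k, minimally generated by m+1 elements. Then L has breadth type (0, m) if and only if L is isomorphic to ℒ_m/I for some proper central ideal I ⊊ Z(ℒ_m) of ℒ_m such that I contains no nonzero element of the form [a, b] with a, b ∈ ℒ_m. -/

import Mathlib

/- Common definitions: breadth, breadth type, derived subalgebra, Camina Lie algebras,
nilpotency class, minimal generation, and free nilpotent Lie algebras. -/

open Module

section Defs

variable (k : Type*) [Field k]

/-- The breadth of an element `x` of a Lie algebra: the rank of the adjoint map `ad x`
(equivalently, the codimension of the centralizer of `x`). -/
noncomputable def breadth (L : Type*) [LieRing L] [LieAlgebra k L] (x : L) : ℕ :=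
  Module.finrank k (LinearMap.range (LieAlgebra.ad k L x))

/-- A Lie algebra has breadth type `S` if `S` is exactly the set of breadths of its elements. -/
def HasBreadthType (L : Type*) [LieRing L] [LieAlgebra k L] (S : Set ℕ) : Prop :=
  Set.range (breadth k L) = S

/-- The derived subalgebra `L' = [L, L]` as a Lie ideal. -/
abbrev derivedIdeal (L : Type*) [LieRing L] [LieAlgebra k L] : LieIdeal k L :=
  ⁅(⊤ : LieIdeal k L), (⊤ : LieIdeal k L)⁆

lemma lie_mem_derivedIdeal (L : Type*) [LieRing L] [LieAlgebra k L] (x y : L) :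
    ⁅x, y⁆ ∈ derivedIdeal k L :=
  LieSubmodule.lie_mem_lie (LieSubmodule.mem_top x) (LieSubmodule.mem_top y)

/-- A Camina Lie algebra: `[x, L] = L'` for every `x ∈ L \ L'`. -/
def IsCamina (L : Type*) [LieRing L] [LieAlgebra k L] : Prop :=
  ∀ x : L, x ∉ derivedIdeal k L →
    LinearMap.range (LieAlgebra.ad k L x) = (derivedIdeal k L).toSubmodule

/-- A Lie algebra is nilpotent of class exactly `c`. -/
def IsNilpotentOfClass (L : Type*) [LieRing L] [LieAlgebra k L] (c : ℕ) : Prop :=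
  LieModule.lowerCentralSeries k L L c = ⊥ ∧ ∀ b < c, LieModule.lowerCentralSeries k L L b ≠ ⊥

/-- A Lie algebra is minimally generated by `n` elements: some `n` elements generate it
and no fewer elements generate it. -/
def MinimallyGenerated (L : Type*) [LieRing L] [LieAlgebra k L] (n : ℕ) : Prop :=
  (∃ s : Finset L, s.card = n ∧ LieSubalgebra.lieSpan k L ↑s = ⊤) ∧
  ∀ s : Finset L, LieSubalgebra.lieSpan k L ↑s = ⊤ → n ≤ s.card

/-- The free `c`-step nilpotent Lie algebra on `n` generators: the quotient of the free
Lie algebra on `n` generators by the `(c+1)`-st term `γ_{c+1}` of its lower central series. -/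
abbrev FreeNilp (c n : ℕ) :=
  FreeLieAlgebra k (Fin n) ⧸
    LieModule.lowerCentralSeries k (FreeLieAlgebra k (Fin n)) (FreeLieAlgebra k (Fin n)) c

/-- The canonical generators of the free `c`-step nilpotent Lie algebra on `n` generators. -/
noncomputable def gen (c n : ℕ) (i : Fin n) : FreeNilp k c n :=
  LieSubmodule.Quotient.mk
    (N := LieModule.lowerCentralSeries k (FreeLieAlgebra k (Fin n)) (FreeLieAlgebra k (Fin n)) c)
    (FreeLieAlgebra.of k i)

end Defs

section Aux
variable {k : Type*} [Field k] {A B : Type*} [LieRing A] [LieAlgebra k A]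
  [LieRing B] [LieAlgebra k B]

/-- triple brackets vanish iff lcs 2 = ⊥ -/
lemma lcs2_eq_bot_iff :
    LieModule.lowerCentralSeries k A A 2 = ⊥ ↔ ∀ a b c : A, ⁅a, ⁅b, c⁆⁆ = 0 := by
  constructor
  · intro h a b c
    have : ⁅a, ⁅b, c⁆⁆ ∈ LieModule.lowerCentralSeries k A A 2 := by
      rw [show (2:ℕ) = 1+1 from rfl, LieModule.lowerCentralSeries_succ,
        show (1:ℕ) = 0+1 from rfl, LieModule.lowerCentralSeries_succ,
        LieModule.lowerCentralSeries_zero]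
      exact LieSubmodule.lie_mem_lie (LieSubmodule.mem_top a)
        (LieSubmodule.lie_mem_lie (LieSubmodule.mem_top b) (LieSubmodule.mem_top c))
    rw [h] at this
    simpa using this
  · intro h
    rw [show (2:ℕ) = 1+1 from rfl, LieModule.lowerCentralSeries_succ, eq_bot_iff]
    have hle : LieModule.lowerCentralSeries k A A 1 ≤ LieAlgebra.center k A := by
      rw [show (1:ℕ) = 0+1 from rfl, LieModule.lowerCentralSeries_succ,
        LieModule.lowerCentralSeries_zero]
      rw [LieSubmodule.lie_le_iff]
      intro x _ m _
      rw [LieModule.mem_maxTrivSubmodule]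
      intro c
      exact h c x m
    calc ⁅(⊤ : LieIdeal k A), LieModule.lowerCentralSeries k A A 1⁆
        ≤ ⁅(⊤ : LieIdeal k A), LieAlgebra.center k A⁆ := LieSubmodule.mono_lie_right _ hle
      _ = ⊥ := LieModule.ideal_oper_maxTrivSubmodule_eq_bot k A A ⊤

end Aux

section Aux2
variable {k : Type*} [Field k] {A B : Type*} [LieRing A] [LieAlgebra k A]
  [LieRing B] [LieAlgebra k B]

/-- Lift of a Lie algebra morphism to a quotient by an ideal contained in its kernel. -/
noncomputable def LieIdeal.qlift (I : LieIdeal k A) (f : A →ₗ⁅k⁆ B)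
    (h : ∀ x ∈ I, f x = 0) : (A ⧸ I) →ₗ⁅k⁆ B :=
  { (I : Submodule k A).liftQ f.toLinearMap (fun x hx => by
      simp only [LinearMap.mem_ker, LieHom.coe_toLinearMap]; exact h x hx) with
    map_lie' := by
      rintro ⟨x⟩ ⟨y⟩
      exact f.map_lie x y }

@[simp] lemma LieIdeal.qlift_mk (I : LieIdeal k A) (f : A →ₗ⁅k⁆ B)
    (h : ∀ x ∈ I, f x = 0) (x : A) :
    LieIdeal.qlift I f h (LieSubmodule.Quotient.mk (N := I) x) = f x := rfl

/-- the quotient map as a morphism of Lie algebras -/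
def LieIdeal.qmk (I : LieIdeal k A) : A →ₗ⁅k⁆ (A ⧸ I) :=
  { (I : Submodule k A).mkQ with
    map_lie' := fun {_ _} => rfl }

@[simp] lemma LieIdeal.qmk_apply (I : LieIdeal k A) (x : A) :
    LieIdeal.qmk I x = LieSubmodule.Quotient.mk (N := I) x := rfl

lemma LieIdeal.qmk_surjective (I : LieIdeal k A) : Function.Surjective (LieIdeal.qmk I) :=
  Submodule.mkQ_surjective _


lemma lieHom_map_sum {ι : Type*} (f : A →ₗ⁅k⁆ B) (s : Finset ι) (g : ι → A) :
    f (∑ i ∈ s, g i) = ∑ i ∈ s, f (g i) :=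
  map_sum f.toLinearMap g s

lemma lieHom_map_sub (f : A →ₗ⁅k⁆ B) (x y : A) : f (x - y) = f x - f y :=
  map_sub f.toLinearMap x y

lemma lieHom_map_smul (f : A →ₗ⁅k⁆ B) (t : k) (x : A) : f (t • x) = t • f x :=
  map_smul f.toLinearMap t x

/-- Two Lie algebra morphisms agreeing on a lie-generating set agree. -/
lemma LieHom.ext_on {s : Set A} (hs : LieSubalgebra.lieSpan k A s = ⊤)
    {f g : A →ₗ⁅k⁆ B} (h : ∀ x ∈ s, f x = g x) : f = g := by
  have : ∀ x : A, f x = g x := by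
    intro x
    let K : LieSubalgebra k A :=
      { carrier := {x | f x = g x}
        add_mem' := fun ha hb => by simp_all
        zero_mem' := by simp
        smul_mem' := fun t a ha => by simp_all
        lie_mem' := fun {a b} ha hb => by
          simp only [Set.mem_setOf_eq] at *
          rw [f.map_lie, g.map_lie, ha, hb] }
    have hx : x ∈ K := by
      have hle : LieSubalgebra.lieSpan k A s ≤ K := by
        rw [LieSubalgebra.lieSpan_le]; exact h
      exact hle (hs ▸ LieSubalgebra.mem_top x)
    exact hx
  exact LieHom.ext this

/-- The free Lie algebra is generated by its generators. -/
lemma FreeLieAlgebra.lieSpan_range_of (X : Type*) :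
    LieSubalgebra.lieSpan k (FreeLieAlgebra k X) (Set.range (FreeLieAlgebra.of k)) = ⊤ := by
  set K := LieSubalgebra.lieSpan k (FreeLieAlgebra k X) (Set.range (FreeLieAlgebra.of k)) with hK
  have hof : ∀ x : X, FreeLieAlgebra.of k x ∈ K :=
    fun x => LieSubalgebra.subset_lieSpan ⟨x, rfl⟩
  let g : FreeLieAlgebra k X →ₗ⁅k⁆ K :=
    FreeLieAlgebra.lift k (fun x => ⟨FreeLieAlgebra.of k x, hof x⟩)
  have hcomp : K.incl.comp g = (LieHom.id : FreeLieAlgebra k X →ₗ⁅k⁆ FreeLieAlgebra k X) := by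
    have h1 : (K.incl.comp g) ∘ (FreeLieAlgebra.of k) = FreeLieAlgebra.of k := by
      funext x; simp [g]
    have h2 := (FreeLieAlgebra.lift_unique (FreeLieAlgebra.of k) (K.incl.comp g)).mp h1
    have h3 := (FreeLieAlgebra.lift_unique (FreeLieAlgebra.of k)
      (LieHom.id : FreeLieAlgebra k X →ₗ⁅k⁆ FreeLieAlgebra k X)).mp (by funext x; rfl)
    rw [h2, ← h3]
  refine eq_top_iff.mpr fun x _ => ?_
  have : K.incl (g x) = x := by
    have := congrArg (fun f : FreeLieAlgebra k X →ₗ⁅k⁆ FreeLieAlgebra k X => f x) hcomp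
    simpa using this
  rw [← this]
  exact (g x).2

end Aux2

section FreeNilpAux
variable {k : Type*} [Field k] {n : ℕ} {B : Type*} [LieRing B] [LieAlgebra k B]

lemma lieSpan_range_gen :
    LieSubalgebra.lieSpan k (FreeNilp k 2 n) (Set.range (gen k 2 n)) = ⊤ := by
  set K := LieSubalgebra.lieSpan k (FreeNilp k 2 n) (Set.range (gen k 2 n)) with hK
  set I : LieIdeal k (FreeLieAlgebra k (Fin n)) :=
    LieModule.lowerCentralSeries k (FreeLieAlgebra k (Fin n)) (FreeLieAlgebra k (Fin n)) 2 with hI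
  refine eq_top_iff.mpr fun x _ => ?_
  obtain ⟨y, rfl⟩ := LieIdeal.qmk_surjective I x
  have hy : y ∈ LieSubalgebra.comap (LieIdeal.qmk I) K := by
    have hle : LieSubalgebra.lieSpan k (FreeLieAlgebra k (Fin n))
        (Set.range (FreeLieAlgebra.of k)) ≤ LieSubalgebra.comap (LieIdeal.qmk I) K := by
      rw [LieSubalgebra.lieSpan_le]
      rintro _ ⟨i, rfl⟩
      show LieIdeal.qmk I (FreeLieAlgebra.of k i) ∈ K
      exact LieSubalgebra.subset_lieSpan ⟨i, rfl⟩
    exact hle (by rw [FreeLieAlgebra.lieSpan_range_of]; exact LieSubalgebra.mem_top y)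
  exact hy

/-- universal property of the free 2-step nilpotent Lie algebra -/
noncomputable def nilpLift (hB : ∀ a b c : B, ⁅a, ⁅b, c⁆⁆ = 0) (g : Fin n → B) :
    FreeNilp k 2 n →ₗ⁅k⁆ B :=
  LieIdeal.qlift _ (FreeLieAlgebra.lift k g) (by
    intro x hx
    have h1 : (FreeLieAlgebra.lift k g) x ∈ LieIdeal.map (FreeLieAlgebra.lift k g)
        (LieModule.lowerCentralSeries k (FreeLieAlgebra k (Fin n)) (FreeLieAlgebra k (Fin n)) 2) :=
      LieIdeal.mem_map hx
    have h2 := LieIdeal.map_lowerCentralSeries_le (R := k) 2 (f := FreeLieAlgebra.lift k g)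
    have h3 := h2 h1
    rw [lcs2_eq_bot_iff.mpr hB] at h3
    simpa using h3)

@[simp] lemma nilpLift_gen (hB : ∀ a b c : B, ⁅a, ⁅b, c⁆⁆ = 0) (g : Fin n → B) (i : Fin n) :
    nilpLift hB g (gen k 2 n i) = g i := by
  show LieIdeal.qlift _ _ _ (LieSubmodule.Quotient.mk _) = g i
  rw [LieIdeal.qlift_mk]
  simp

lemma freeNilp_triple (a b c : FreeNilp k 2 n) : ⁅a, ⁅b, c⁆⁆ = 0 := by
  set I : LieIdeal k (FreeLieAlgebra k (Fin n)) :=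
    LieModule.lowerCentralSeries k (FreeLieAlgebra k (Fin n)) (FreeLieAlgebra k (Fin n)) 2 with hI
  obtain ⟨a, rfl⟩ := LieIdeal.qmk_surjective I a
  obtain ⟨b, rfl⟩ := LieIdeal.qmk_surjective I b
  obtain ⟨c, rfl⟩ := LieIdeal.qmk_surjective I c
  rw [← (LieIdeal.qmk I).map_lie, ← (LieIdeal.qmk I).map_lie]
  have : ⁅a, ⁅b, c⁆⁆ ∈ I := by
    rw [hI, show (2:ℕ) = 1+1 from rfl, LieModule.lowerCentralSeries_succ,
      show (1:ℕ) = 0+1 from rfl, LieModule.lowerCentralSeries_succ,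
      LieModule.lowerCentralSeries_zero]
    exact LieSubmodule.lie_mem_lie (LieSubmodule.mem_top a)
      (LieSubmodule.lie_mem_lie (LieSubmodule.mem_top b) (LieSubmodule.mem_top c))
  show LieSubmodule.Quotient.mk (N := I) _ = 0
  rwa [LieSubmodule.Quotient.mk_eq_zero']

end FreeNilpAux
section Model
variable (k : Type*) [Field k] (n : ℕ)

/-- model of the free 2-step nilpotent Lie algebra: `k^n ⊕ (k^n ⊗ k^n)` with bracket
`[(v,w),(v',w')] = (0, v ⊗ v' - v' ⊗ v)`. -/
def ModelH : Type _ := (Fin n → k) × (Fin n → Fin n → k)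

instance : AddCommGroup (ModelH k n) :=
  inferInstanceAs (AddCommGroup ((Fin n → k) × (Fin n → Fin n → k)))

instance : Module k (ModelH k n) :=
  inferInstanceAs (Module k ((Fin n → k) × (Fin n → Fin n → k)))

namespace ModelH

variable {k n}

def mk' (v : Fin n → k) (w : Fin n → Fin n → k) : ModelH k n := (v, w)

def v (x : ModelH k n) : Fin n → k := Prod.fst x

def w (x : ModelH k n) : Fin n → Fin n → k := Prod.snd x

@[simp] lemma v_mk' (a : Fin n → k) (b) : (mk' a b).v = a := rfl
@[simp] lemma w_mk' (a : Fin n → k) (b) : (mk' a b).w = b := rfl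
@[simp] lemma v_add (x y : ModelH k n) : (x + y).v = x.v + y.v := rfl
@[simp] lemma w_add (x y : ModelH k n) : (x + y).w = x.w + y.w := rfl
@[simp] lemma v_smul (t : k) (x : ModelH k n) : (t • x).v = t • x.v := rfl
@[simp] lemma w_smul (t : k) (x : ModelH k n) : (t • x).w = t • x.w := rfl
@[simp] lemma v_zero : (0 : ModelH k n).v = 0 := rfl
@[simp] lemma w_zero : (0 : ModelH k n).w = 0 := rfl

@[ext] lemma ext {x y : ModelH k n} (h1 : x.v = y.v) (h2 : x.w = y.w) : x = y :=
  Prod.ext h1 h2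

instance : Bracket (ModelH k n) (ModelH k n) :=
  ⟨fun x y => mk' 0 (fun i j => x.v i * y.v j - y.v i * x.v j)⟩

lemma lie_def (x y : ModelH k n) :
    ⁅x, y⁆ = mk' 0 (fun i j => x.v i * y.v j - y.v i * x.v j) := rfl

@[simp] lemma v_lie (x y : ModelH k n) : (⁅x, y⁆).v = 0 := rfl
@[simp] lemma w_lie (x y : ModelH k n) :
    (⁅x, y⁆).w = fun i j => x.v i * y.v j - y.v i * x.v j := rfl

instance : LieRing (ModelH k n) where
  add_lie x y z := by ext <;> simp <;> ring_nf <;> simp [mul_comm, mul_add, add_mul] <;> ring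
  lie_add x y z := by ext <;> simp <;> ring_nf <;> simp [mul_comm, mul_add, add_mul] <;> ring
  lie_self x := by ext <;> simp
  leibniz_lie x y z := by ext <;> simp

instance : LieAlgebra k (ModelH k n) where
  lie_smul t x y := by ext <;> simp <;> ring_nf <;> simp [mul_comm] <;> ring

lemma triple (a b c : ModelH k n) : ⁅a, ⁅b, c⁆⁆ = 0 := by ext <;> simp

end ModelH
end Model

section Structure
variable {k : Type*} [Field k] {n : ℕ}

/-- the first-component projection as a linear map -/
def ModelH.vLin : ModelH k n →ₗ[k] (Fin n → k) where
  toFun := ModelH.v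
  map_add' := fun x y => rfl
  map_smul' := fun t x => rfl

/-- the canonical morphism to the model -/
noncomputable def Phi : FreeNilp k 2 n →ₗ⁅k⁆ ModelH k n :=
  nilpLift ModelH.triple (fun i => ModelH.mk' (Pi.single i 1) 0)

/-- the abelianization coordinates -/
noncomputable def piF : FreeNilp k 2 n →ₗ[k] (Fin n → k) :=
  ModelH.vLin.comp (Phi : FreeNilp k 2 n →ₗ⁅k⁆ ModelH k n).toLinearMap

@[simp] lemma piF_gen (i : Fin n) : piF (gen k 2 n i) = Pi.single i 1 := by
  simp [piF, Phi, ModelH.vLin]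
  rfl

lemma piF_lie (x y : FreeNilp k 2 n) : piF ⁅x, y⁆ = 0 := by
  show ModelH.vLin (Phi ⁅x, y⁆) = 0
  rw [(Phi (k := k)).map_lie]
  rfl

lemma piF_eq_zero_of_mem_derived {x : FreeNilp k 2 n} (hx : x ∈ derivedIdeal k (FreeNilp k 2 n)) :
    piF x = 0 := by
  let N : LieSubmodule k (FreeNilp k 2 n) (FreeNilp k 2 n) :=
    { LinearMap.ker (piF (k := k) (n := n)) with
      lie_mem := fun {y z} _ => by
        show piF ⁅y, z⁆ = 0
        exact piF_lie y z }
  have hle : derivedIdeal k (FreeNilp k 2 n) ≤ N := by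
    rw [LieSubmodule.lie_le_iff]
    intro a _ b _
    show piF ⁅a, b⁆ = 0
    exact piF_lie a b
  exact hle hx

lemma derived_central {x : FreeNilp k 2 n} (hx : x ∈ derivedIdeal k (FreeNilp k 2 n))
    (y : FreeNilp k 2 n) : ⁅y, x⁆ = 0 := by
  have hle : derivedIdeal k (FreeNilp k 2 n) ≤ LieAlgebra.center k (FreeNilp k 2 n) := by
    rw [LieSubmodule.lie_le_iff]
    intro a _ b _
    rw [LieModule.mem_maxTrivSubmodule]
    intro c
    exact freeNilp_triple c a b
  have := hle hx
  rw [LieModule.mem_maxTrivSubmodule] at this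
  exact this y

lemma sub_sum_mem_derived (x : FreeNilp k 2 n) :
    x - (∑ i, piF x i • gen k 2 n i) ∈ derivedIdeal k (FreeNilp k 2 n) := by
  classical
  let K : LieSubalgebra k (FreeNilp k 2 n) :=
    { (Submodule.span k (Set.range (gen k 2 n)) ⊔
        (derivedIdeal k (FreeNilp k 2 n)).toSubmodule : Submodule k (FreeNilp k 2 n)) with
      lie_mem' := fun {a b} _ _ => by
        exact Submodule.mem_sup_right (lie_mem_derivedIdeal k (FreeNilp k 2 n) a b) }
  have hx : x ∈ K := by
    have hle : LieSubalgebra.lieSpan k (FreeNilp k 2 n) (Set.range (gen k 2 n)) ≤ K := by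
      rw [LieSubalgebra.lieSpan_le]
      rintro _ ⟨i, rfl⟩
      exact Submodule.mem_sup_left (Submodule.subset_span ⟨i, rfl⟩)
    exact hle ((lieSpan_range_gen (k := k) (n := n)) ▸ LieSubalgebra.mem_top x)
  have hx2 : x ∈ (Submodule.span k (Set.range (gen k 2 n)) ⊔
      (derivedIdeal k (FreeNilp k 2 n)).toSubmodule : Submodule k (FreeNilp k 2 n)) := hx
  obtain ⟨a, ha, d, hd, rfl⟩ := Submodule.mem_sup.mp hx2
  obtain ⟨c, rfl⟩ := (Submodule.mem_span_range_iff_exists_fun k).mp ha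
  have hpi : piF ((∑ i, c i • gen k 2 n i) + d) = c := by
    rw [map_add, piF_eq_zero_of_mem_derived hd, add_zero, map_sum]
    funext j
    simp only [map_smul, piF_gen]
    simp [Finset.sum_apply, Pi.single_apply]
  rw [hpi]
  simpa using hd

lemma mem_derived_iff_piF_eq_zero (x : FreeNilp k 2 n) :
    x ∈ derivedIdeal k (FreeNilp k 2 n) ↔ piF x = 0 := by
  refine ⟨piF_eq_zero_of_mem_derived, fun h => ?_⟩
  have := sub_sum_mem_derived x
  rw [h] at this
  simpa using this

/-- key structural fact: centralizers in the free 2-step nilpotent Lie algebra -/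
lemma exists_smul_of_lie_eq_zero {x y : FreeNilp k 2 n} (hx : piF x ≠ 0)
    (h : ⁅x, y⁆ = 0) : ∃ t : k, piF y = t • piF x := by
  have hw : (Phi ⁅x, y⁆ : ModelH k n).w = 0 := by rw [h]; rfl
  rw [(Phi (k := k)).map_lie] at hw
  rw [ModelH.w_lie] at hw
  have hvx : (Phi x).v = piF x := rfl
  have hvy : (Phi y).v = piF y := rfl
  rw [hvx, hvy] at hw
  obtain ⟨i0, hi0⟩ : ∃ i0, piF x i0 ≠ 0 := by
    by_contra hc
    push_neg at hc
    exact hx (funext hc)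
  refine ⟨piF y i0 / piF x i0, funext fun j => ?_⟩
  have := congrFun (congrFun hw i0) j
  simp only [Pi.zero_apply, sub_eq_zero] at this
  field_simp
  rw [Pi.smul_apply, smul_eq_mul, div_mul_eq_mul_div, eq_div_iff hi0, mul_comm (piF y j)]
  exact this

end Structure

section Breadth
variable {k : Type*} [Field k] {n : ℕ} {B : Type*} [LieRing B] [LieAlgebra k B]

lemma lie_sum_piF (x : FreeNilp k 2 n) : ⁅x, ∑ i, piF x i • gen k 2 n i⁆ = 0 := by
  have hy := sub_sum_mem_derived x
  have h1 : (∑ i, piF x i • gen k 2 n i) = x - (x - ∑ i, piF x i • gen k 2 n i) := by abel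
  rw [h1]
  have h2 := map_sub (LieAlgebra.ad k (FreeNilp k 2 n) x) x (x - ∑ i, piF x i • gen k 2 n i)
  simp only [LieAlgebra.ad_apply] at h2
  rw [h2, lie_self, derived_central hy x, sub_zero]

lemma lie_eq_sum (x y : FreeNilp k 2 n) : ⁅x, y⁆ = ∑ i, piF y i • ⁅x, gen k 2 n i⁆ := by
  have hy := sub_sum_mem_derived y
  have h1 : y = (∑ i, piF y i • gen k 2 n i) + (y - ∑ i, piF y i • gen k 2 n i) := by abel
  conv_lhs => rw [h1]
  have h2 := map_add (LieAlgebra.ad k (FreeNilp k 2 n) x) (∑ i, piF y i • gen k 2 n i)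
    (y - ∑ i, piF y i • gen k 2 n i)
  simp only [LieAlgebra.ad_apply] at h2
  rw [h2, derived_central hy x, add_zero]
  have h3 := map_sum (LieAlgebra.ad k (FreeNilp k 2 n) x) (fun i => piF y i • gen k 2 n i)
    Finset.univ
  simp only [LieAlgebra.ad_apply] at h3
  rw [h3]
  exact Finset.sum_congr rfl fun i _ => lie_smul _ _ _

lemma lie_smul_sum (x : FreeNilp k 2 n) (c : Fin n → k) :
    ⁅x, ∑ i, c i • gen k 2 n i⁆ = ∑ i, c i • ⁅x, gen k 2 n i⁆ := by
  have h3 := map_sum (LieAlgebra.ad k (FreeNilp k 2 n) x) (fun i => c i • gen k 2 n i)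
    Finset.univ
  simp only [LieAlgebra.ad_apply] at h3
  rw [h3]
  exact Finset.sum_congr rfl fun i _ => lie_smul _ _ _

lemma range_ad_eq (φ : FreeNilp k 2 n →ₗ⁅k⁆ B) (hφ : Function.Surjective φ)
    (x : FreeNilp k 2 n) :
    LinearMap.range (LieAlgebra.ad k B (φ x)) =
      Submodule.span k (Set.range fun i => φ ⁅x, gen k 2 n i⁆) := by
  apply le_antisymm
  · rintro _ ⟨z, rfl⟩
    obtain ⟨y, rfl⟩ := hφ z
    show ⁅φ x, φ y⁆ ∈ _
    rw [← φ.map_lie, lie_eq_sum x y, ← LieHom.coe_toLinearMap φ, map_sum]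
    simp only [map_smul]
    exact (Submodule.mem_span_range_iff_exists_fun k).mpr ⟨fun i => piF y i, rfl⟩
  · rw [Submodule.span_le]
    rintro _ ⟨i, rfl⟩
    exact ⟨φ (gen k 2 n i), by simp [LieAlgebra.ad_apply, φ.map_lie]⟩

lemma psi_apply (φ : FreeNilp k 2 n →ₗ⁅k⁆ B) (x : FreeNilp k 2 n) (c : Fin n → k) :
    Fintype.linearCombination k (fun i => φ ⁅x, gen k 2 n i⁆) c =
      φ ⁅x, ∑ i, c i • gen k 2 n i⁆ := by
  rw [Fintype.linearCombination_apply, lie_smul_sum, ← LieHom.coe_toLinearMap φ, map_sum]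
  simp only [map_smul]

lemma breadth_phi (φ : FreeNilp k 2 n →ₗ⁅k⁆ B) (hφ : Function.Surjective φ)
    (x : FreeNilp k 2 n) :
    breadth k B (φ x) + finrank k (LinearMap.ker (Fintype.linearCombination k
      (fun i => φ ⁅x, gen k 2 n i⁆))) = n := by
  have h1 : breadth k B (φ x) = finrank k (LinearMap.range (Fintype.linearCombination k
      (fun i => φ ⁅x, gen k 2 n i⁆))) := by
    rw [breadth, range_ad_eq φ hφ x, Fintype.range_linearCombination]
  rw [h1, LinearMap.finrank_range_add_finrank_ker, Module.finrank_fin_fun]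

lemma breadth_zero_of_central {z : B} (h : ∀ y : B, ⁅z, y⁆ = 0) : breadth k B z = 0 := by
  have hr : LinearMap.range (LieAlgebra.ad k B z) = ⊥ := by
    rw [LinearMap.range_eq_bot]
    ext y
    simpa [LieAlgebra.ad_apply] using h y
  rw [breadth, hr, finrank_bot]

lemma breadth_zero : breadth k B 0 = 0 :=
  breadth_zero_of_central (fun y => zero_lie y)

lemma breadth_congr {B' : Type*} [LieRing B'] [LieAlgebra k B'] (e : B ≃ₗ⁅k⁆ B') (x : B) :
    breadth k B' (e x) = breadth k B x := by
  have hrange : LinearMap.range (LieAlgebra.ad k B' (e x)) =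
      Submodule.map (e.toLinearEquiv : B →ₗ[k] B') (LinearMap.range (LieAlgebra.ad k B x)) := by
    apply le_antisymm
    · rintro _ ⟨z, rfl⟩
      obtain ⟨y, rfl⟩ := e.surjective z
      refine ⟨⁅x, y⁆, ⟨y, rfl⟩, ?_⟩
      show e.toLieHom ⁅x, y⁆ = _
      rw [LieHom.map_lie]
      simp [LieAlgebra.ad_apply]
    · rintro _ ⟨_, ⟨y, rfl⟩, rfl⟩
      refine ⟨e y, ?_⟩
      show ⁅e x, e y⁆ = _
      rw [show (⁅e x, e y⁆ : B') = e.toLieHom ⁅x, y⁆ from (LieHom.map_lie _ _ _).symm]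
      rfl
  rw [breadth, breadth, hrange, LinearEquiv.finrank_map_eq]

end Breadth

section Backward
variable {k : Type*} [Field k] {n : ℕ}

lemma piF_sum (c : Fin n → k) : piF (∑ i, c i • gen k 2 n i) = c := by
  rw [map_sum]
  funext j
  simp only [map_smul, piF_gen]
  simp [Finset.sum_apply, Pi.single_apply]

lemma breadth_qmk_of_piF_eq_zero (I : LieIdeal k (FreeNilp k 2 n)) {x : FreeNilp k 2 n}
    (hx : piF x = 0) : breadth k (FreeNilp k 2 n ⧸ I) (LieIdeal.qmk I x) = 0 := by
  apply breadth_zero_of_central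
  intro z
  obtain ⟨y, rfl⟩ := LieIdeal.qmk_surjective I z
  rw [← (LieIdeal.qmk I).map_lie]
  have hxd : x ∈ derivedIdeal k (FreeNilp k 2 n) := (mem_derived_iff_piF_eq_zero x).mpr hx
  have h0 : ⁅x, y⁆ = 0 := by
    rw [← lie_skew, derived_central hxd y, neg_zero]
  rw [h0, LieIdeal.qmk_apply]
  rw [LieSubmodule.Quotient.mk_eq_zero']
  exact I.zero_mem

lemma breadth_qmk_of_piF_ne_zero (I : LieIdeal k (FreeNilp k 2 n))
    (hIbr : ∀ a b : FreeNilp k 2 n, ⁅a, b⁆ ∈ I → ⁅a, b⁆ = 0)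
    {x : FreeNilp k 2 n} (hx : piF x ≠ 0) :
    breadth k (FreeNilp k 2 n ⧸ I) (LieIdeal.qmk I x) + 1 = n := by
  have hker : LinearMap.ker (Fintype.linearCombination k
      (fun i => LieIdeal.qmk I ⁅x, gen k 2 n i⁆)) = Submodule.span k {piF x} := by
    ext c
    rw [LinearMap.mem_ker, psi_apply, Submodule.mem_span_singleton]
    constructor
    · intro h
      have hmem : ⁅x, ∑ i, c i • gen k 2 n i⁆ ∈ I := by
        rwa [LieIdeal.qmk_apply, LieSubmodule.Quotient.mk_eq_zero'] at h
      have h0 : ⁅x, ∑ i, c i • gen k 2 n i⁆ = 0 := hIbr _ _ hmem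
      obtain ⟨t, ht⟩ := exists_smul_of_lie_eq_zero hx h0
      rw [piF_sum] at ht
      exact ⟨t, ht.symm⟩
    · rintro ⟨t, rfl⟩
      have h1 : (∑ i, (t • piF x) i • gen k 2 n i) = t • ∑ i, piF x i • gen k 2 n i := by
        rw [Finset.smul_sum]
        exact Finset.sum_congr rfl fun i _ => by simp [smul_smul]
      have h2 := map_smul (LieAlgebra.ad k (FreeNilp k 2 n) x) t (∑ i, piF x i • gen k 2 n i)
      simp only [LieAlgebra.ad_apply] at h2
      rw [h1, h2, lie_sum_piF, smul_zero, LieIdeal.qmk_apply,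
        LieSubmodule.Quotient.mk_eq_zero']
      exact I.zero_mem
  have := breadth_phi (LieIdeal.qmk I) (LieIdeal.qmk_surjective I) x
  rwa [hker, finrank_span_singleton hx] at this

lemma hasBreadthType_of_quotient (m : ℕ) (I : LieIdeal k (FreeNilp k 2 (m+1)))
    (hIbr : ∀ a b : FreeNilp k 2 (m+1), ⁅a, b⁆ ∈ I → ⁅a, b⁆ = 0)
    {L : Type*} [LieRing L] [LieAlgebra k L] (e : L ≃ₗ⁅k⁆ (FreeNilp k 2 (m+1) ⧸ I)) :
    HasBreadthType k L {0, m} := by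
  ext r
  simp only [Set.mem_range, Set.mem_insert_iff, Set.mem_singleton_iff]
  constructor
  · rintro ⟨x, rfl⟩
    rw [← breadth_congr e x]
    obtain ⟨y, hy⟩ := LieIdeal.qmk_surjective I (e x)
    rw [← hy]
    by_cases hpi : piF y = 0
    · exact Or.inl (breadth_qmk_of_piF_eq_zero I hpi)
    · right
      have := breadth_qmk_of_piF_ne_zero I hIbr hpi
      omega
  · rintro (rfl | hEq)
    · exact ⟨0, breadth_zero⟩
    · rw [hEq]
      refine ⟨e.symm (LieIdeal.qmk I (gen k 2 (m+1) 0)), ?_⟩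
      have h1 : e (e.symm (LieIdeal.qmk I (gen k 2 (m+1) 0))) =
          LieIdeal.qmk I (gen k 2 (m+1) 0) := e.apply_symm_apply _
      rw [← breadth_congr e, h1]
      have hpi : piF (gen k 2 (m+1) (0 : Fin (m+1))) ≠ 0 := by
        rw [piF_gen]
        intro hc
        have := congrFun hc 0
        simp at this
      have := breadth_qmk_of_piF_ne_zero I hIbr hpi
      omega

end Backward

section Frattini
variable {k : Type*} [Field k] {B : Type*} [LieRing B] [LieAlgebra k B]

lemma derived_le_center' (hT : ∀ a b c : B, ⁅a, ⁅b, c⁆⁆ = 0) :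
    derivedIdeal k B ≤ LieAlgebra.center k B := by
  rw [LieSubmodule.lie_le_iff]
  intro a _ b _
  rw [LieModule.mem_maxTrivSubmodule]
  exact fun c => hT c a b

lemma central_lie_zero (hT : ∀ a b c : B, ⁅a, ⁅b, c⁆⁆ = 0) {x : B}
    (hx : x ∈ derivedIdeal k B) (y : B) : ⁅y, x⁆ = 0 := by
  have h1 := derived_le_center' (k := k) hT hx
  rw [LieModule.mem_maxTrivSubmodule] at h1
  exact h1 y

lemma central_lie_zero' (hT : ∀ a b c : B, ⁅a, ⁅b, c⁆⁆ = 0) {x : B}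
    (hx : x ∈ derivedIdeal k B) (y : B) : ⁅x, y⁆ = 0 := by
  rw [← lie_skew, central_lie_zero hT hx y, neg_zero]

lemma span_sup_derived (W : Set B) (hW : LieSubalgebra.lieSpan k B W = ⊤) :
    Submodule.span k W ⊔ (derivedIdeal k B).toSubmodule = ⊤ := by
  let K : LieSubalgebra k B :=
    { (Submodule.span k W ⊔ (derivedIdeal k B).toSubmodule : Submodule k B) with
      lie_mem' := fun {a b} _ _ => Submodule.mem_sup_right (lie_mem_derivedIdeal k B a b) }
  have hle : LieSubalgebra.lieSpan k B W ≤ K := by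
    rw [LieSubalgebra.lieSpan_le]
    exact fun x hx => Submodule.mem_sup_left (Submodule.subset_span hx)
  rw [eq_top_iff]
  intro x _
  exact hle (hW ▸ LieSubalgebra.mem_top x)

lemma lieSpan_eq_top_of_span_sup (hT : ∀ a b c : B, ⁅a, ⁅b, c⁆⁆ = 0) (W : Set B)
    (hW : Submodule.span k W ⊔ (derivedIdeal k B).toSubmodule = ⊤) :
    LieSubalgebra.lieSpan k B W = ⊤ := by
  set A := LieSubalgebra.lieSpan k B W with hA
  have hWA : Submodule.span k W ≤ A.toSubmodule := by
    rw [Submodule.span_le]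
    exact fun x hx => LieSubalgebra.subset_lieSpan hx
  have hdec : ∀ x : B, ∃ w d : B, w ∈ Submodule.span k W ∧ d ∈ derivedIdeal k B ∧ x = w + d := by
    intro x
    have hx : x ∈ Submodule.span k W ⊔ (derivedIdeal k B).toSubmodule := hW ▸ trivial
    obtain ⟨w, hw, d, hd, rfl⟩ := Submodule.mem_sup.mp hx
    exact ⟨w, d, hw, hd, rfl⟩
  have hbr : ∀ x y : B, ⁅x, y⁆ ∈ A := by
    intro x y
    obtain ⟨w, d, hw, hd, rfl⟩ := hdec x
    obtain ⟨w', d', hw', hd', rfl⟩ := hdec y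
    rw [add_lie, lie_add, lie_add, central_lie_zero hT hd' w, central_lie_zero' hT hd w',
      central_lie_zero' hT hd d']
    simp only [add_zero, zero_add]
    exact A.lie_mem (hWA hw) (hWA hw')
  let NA : LieSubmodule k B B :=
    { A.toSubmodule with
      lie_mem := fun {x y} _ => hbr x y }
  have hDA : (derivedIdeal k B : LieSubmodule k B B) ≤ NA := by
    rw [LieSubmodule.lie_le_iff]
    exact fun x _ m _ => hbr x m
  rw [eq_top_iff]
  intro x _
  obtain ⟨w, d, hw, hd, rfl⟩ := hdec x
  exact A.add_mem (hWA hw) (hDA hd)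

end Frattini

section Forward
variable {k : Type*} [Field k]

lemma exists_ideal_of_hasBreadthType
    (L : Type*) [LieRing L] [LieAlgebra k L] [FiniteDimensional k L]
    (m : ℕ) (hm : 1 ≤ m)
    (h2 : IsNilpotentOfClass k L 2) (hmin : MinimallyGenerated k L (m+1))
    (h : HasBreadthType k L {0, m}) :
    ∃ I : LieIdeal k (FreeNilp k 2 (m+1)),
      I < LieAlgebra.center k (FreeNilp k 2 (m+1)) ∧
      (∀ a b : FreeNilp k 2 (m+1), ⁅a, b⁆ ∈ I → ⁅a, b⁆ = 0) ∧
      Nonempty (L ≃ₗ⁅k⁆ (FreeNilp k 2 (m+1) ⧸ I)) := by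
  classical
  set n := m + 1 with hn
  obtain ⟨hlcs2, hlcsne⟩ := h2
  have hT : ∀ a b c : L, ⁅a, ⁅b, c⁆⁆ = 0 := lcs2_eq_bot_iff.mp hlcs2
  have hTF : ∀ a b c : FreeNilp k 2 n, ⁅a, ⁅b, c⁆⁆ = 0 := fun a b c => freeNilp_triple a b c
  obtain ⟨⟨s, hcard, hspan⟩, hminle⟩ := hmin
  have hcard' : Fintype.card s = n := by rw [Fintype.card_coe, hcard]
  let eqv : s ≃ Fin n := Fintype.equivFinOfCardEq hcard'
  let gL : Fin n → L := fun i => ((eqv.symm i : s) : L)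
  have hginj : Function.Injective gL := fun i j hij => by
    have := Subtype.ext (p := fun x => x ∈ s) hij
    exact eqv.symm.injective this
  have hgmem : ∀ i, gL i ∈ s := fun i => (eqv.symm i).2
  have hgrange : Set.range gL = ↑s := by
    ext x
    constructor
    · rintro ⟨i, rfl⟩; exact hgmem i
    · intro hx
      exact ⟨eqv ⟨x, hx⟩, by simp [gL]⟩
  set φ : FreeNilp k 2 n →ₗ⁅k⁆ L := nilpLift hT gL with hφ
  have hφgen : ∀ i, φ (gen k 2 n i) = gL i := fun i => nilpLift_gen hT gL i
  have hsurj : Function.Surjective φ := by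
    rw [← LieHom.range_eq_top, eq_top_iff, ← hspan, LieSubalgebra.lieSpan_le]
    intro x hx
    rw [← hgrange] at hx
    obtain ⟨i, rfl⟩ := hx
    exact ⟨gen k 2 n i, hφgen i⟩
  -- independence of the generators modulo the derived ideal
  have hind : ∀ c : Fin n → k, (∑ i, c i • gL i) ∈ derivedIdeal k L → c = 0 := by
    intro c hc
    by_contra hcne
    obtain ⟨j, hj⟩ : ∃ j, c j ≠ 0 := by
      by_contra hall; push_neg at hall; exact hcne (funext hall)
    set t := s.erase (gL j) with ht
    have htcard : t.card = m := by
      rw [ht, Finset.card_erase_of_mem (hgmem j), hcard]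
      omega
    have hsub : (↑s : Set L) ⊆
        ↑(Submodule.span k (↑t : Set L) ⊔ (derivedIdeal k L).toSubmodule) := by
      intro x hx
      by_cases hxj : x = gL j
      · subst hxj
        have hsum : c j • gL j =
            (∑ i, c i • gL i) - ∑ i ∈ Finset.univ.erase j, c i • gL i := by
          rw [eq_sub_iff_add_eq]
          exact Finset.add_sum_erase Finset.univ (fun i => c i • gL i) (Finset.mem_univ j)
        have hmem2 : (∑ i ∈ Finset.univ.erase j, c i • gL i) ∈
            Submodule.span k (↑t : Set L) := by
          apply Submodule.sum_mem
          intro i hi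
          apply Submodule.smul_mem
          apply Submodule.subset_span
          have hij : i ≠ j := (Finset.mem_erase.mp hi).1
          exact Finset.mem_coe.mpr
            (Finset.mem_erase.mpr ⟨fun hgij => hij (hginj hgij), hgmem i⟩)
        have hgLj : gL j = (c j)⁻¹ •
            ((∑ i, c i • gL i) - ∑ i ∈ Finset.univ.erase j, c i • gL i) := by
          rw [← hsum, smul_smul, inv_mul_cancel₀ hj, one_smul]
        rw [hgLj]
        exact Submodule.smul_mem _ _
          (Submodule.sub_mem _ (Submodule.mem_sup_right hc) (Submodule.mem_sup_left hmem2))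
      · exact Submodule.mem_sup_left (Submodule.subset_span
          (Finset.mem_coe.mpr (Finset.mem_erase.mpr ⟨hxj, hx⟩)))
    have hWt : Submodule.span k (↑t : Set L) ⊔ (derivedIdeal k L).toSubmodule = ⊤ := by
      have h1 := span_sup_derived (↑s : Set L) hspan
      rw [eq_top_iff, ← h1]
      apply sup_le
      · rw [Submodule.span_le]; exact hsub
      · exact le_sup_right
    have hcon := hminle t (lieSpan_eq_top_of_span_sup hT _ hWt)
    omega
  -- φ maps the derived ideal into the derived ideal
  have hDmap : ∀ {x : FreeNilp k 2 n}, x ∈ derivedIdeal k (FreeNilp k 2 n) →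
      φ x ∈ derivedIdeal k L := by
    intro x hx
    have h1 : φ x ∈ LieIdeal.map φ (derivedIdeal k (FreeNilp k 2 n)) := LieIdeal.mem_map hx
    have h2 : LieIdeal.map φ (derivedIdeal k (FreeNilp k 2 n)) ≤ derivedIdeal k L :=
      le_trans (LieIdeal.map_bracket_le φ) (LieSubmodule.mono_lie le_top le_top)
    exact h2 h1
  set I := φ.ker with hI
  have hID : I ≤ derivedIdeal k (FreeNilp k 2 n) := by
    intro x hx
    have hres := sub_sum_mem_derived x
    have hsum : φ (∑ i, piF x i • gen k 2 n i) = ∑ i, piF x i • gL i := by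
      rw [lieHom_map_sum]
      refine Finset.sum_congr rfl fun i _ => ?_
      rw [lieHom_map_smul, hφgen]
    have hc : piF x = 0 := by
      have h0 : φ x = 0 := LieHom.mem_ker.mp hx
      have h1 : φ (x - ∑ i, piF x i • gen k 2 n i) ∈ derivedIdeal k L := hDmap hres
      have h3 : (∑ i, piF x i • gL i) ∈ derivedIdeal k L := by
        have h4 : φ (x - ∑ i, piF x i • gen k 2 n i) = -(∑ i, piF x i • gL i) := by
          rw [lieHom_map_sub, h0, zero_sub, hsum]
        rw [h4] at h1
        simpa using neg_mem h1
      exact hind _ h3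
    have h5 := hres
    rw [hc] at h5
    simpa using h5
  have hcenterF := derived_le_center' (k := k) hTF
  have hcen : I ≤ LieAlgebra.center k (FreeNilp k 2 n) := le_trans hID hcenterF
  have hne : I ≠ LieAlgebra.center k (FreeNilp k 2 n) := by
    intro heq
    have hDI : derivedIdeal k (FreeNilp k 2 n) ≤ I := heq ▸ hcenterF
    have hzero : ∀ a b : L, ⁅a, b⁆ = 0 := by
      intro a b
      obtain ⟨a', rfl⟩ := hsurj a
      obtain ⟨b', rfl⟩ := hsurj b
      rw [← φ.map_lie]
      exact LieHom.mem_ker.mp (hDI (lie_mem_derivedIdeal k _ a' b'))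
    have hlcs1 : LieModule.lowerCentralSeries k L L 1 = ⊥ := by
      rw [show (1:ℕ) = 0+1 from rfl, LieModule.lowerCentralSeries_succ,
        LieModule.lowerCentralSeries_zero, LieSubmodule.lie_eq_bot_iff]
      exact fun x _ m' _ => hzero x m'
    exact hlcsne 1 (by norm_num) hlcs1
  -- the bracket condition
  have hIbr : ∀ a b : FreeNilp k 2 n, ⁅a, b⁆ ∈ I → ⁅a, b⁆ = 0 := by
    intro a b hab
    by_cases hpa : piF a = 0
    · exact central_lie_zero' hTF ((mem_derived_iff_piF_eq_zero a).mpr hpa) b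
    have hmem : breadth k L (φ a) ∈ ({0, m} : Set ℕ) := h ▸ Set.mem_range_self (φ a)
    rw [Set.mem_insert_iff, Set.mem_singleton_iff] at hmem
    rcases hmem with h0 | hm'
    · exfalso
      have had : ∀ y : L, ⁅φ a, y⁆ = 0 := by
        have hr : LinearMap.range (LieAlgebra.ad k L (φ a)) = ⊥ :=
          Submodule.finrank_eq_zero.mp h0
        intro y
        have hy : LieAlgebra.ad k L (φ a) y ∈ (⊥ : Submodule k L) :=
          hr ▸ LinearMap.mem_range_self _ y
        simpa [LieAlgebra.ad_apply] using hy
      have hnotD : φ a ∉ derivedIdeal k L := by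
        intro hmem2
        have hDeq : LieIdeal.map φ (derivedIdeal k (FreeNilp k 2 n)) = derivedIdeal k L := by
          rw [LieIdeal.map_bracket_eq φ hsurj]
          have htop : LieIdeal.map φ ⊤ = ⊤ := by
            rw [eq_top_iff]
            intro x _
            obtain ⟨y, rfl⟩ := hsurj x
            exact LieIdeal.mem_map (LieSubmodule.mem_top y)
          rw [htop]
        have hcoe := LieIdeal.coe_map_of_surjective (f := φ)
          (I := derivedIdeal k (FreeNilp k 2 n)) hsurj
        have hmem3 : φ a ∈ (derivedIdeal k (FreeNilp k 2 n)).toSubmodule.map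
            (φ : FreeNilp k 2 n →ₗ[k] L) := by
          rw [← hcoe, hDeq]
          exact hmem2
        obtain ⟨d, hd, heq⟩ := Submodule.mem_map.mp hmem3
        have heq' : φ d = φ a := heq
        have hadk : a - d ∈ I := by
          rw [hI, LieHom.mem_ker, lieHom_map_sub, heq', sub_self]
        have haD : a ∈ derivedIdeal k (FreeNilp k 2 n) := by
          have := (derivedIdeal k (FreeNilp k 2 n)).add_mem (hID hadk) hd
          simpa using this
        exact hpa ((mem_derived_iff_piF_eq_zero a).mp haD)
      obtain ⟨w, hw⟩ : ∃ w : L, breadth k L w = m := by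
        have hmm : (m : ℕ) ∈ Set.range (breadth k L) := by
          rw [h]; right; rfl
        exact hmm
      have hwnc : ∃ y : L, ⁅w, y⁆ ≠ 0 := by
        by_contra hall
        push_neg at hall
        have := breadth_zero_of_central (k := k) hall
        omega
      set Z0 := (derivedIdeal k L).toSubmodule with hZ0
      set Z1 := Z0 ⊔ Submodule.span k {φ a} with hZ1
      set Z2 := Z1 ⊔ Submodule.span k {w} with hZ2
      have hZ1c : ∀ z ∈ Z1, ∀ y : L, ⁅z, y⁆ = 0 := by
        intro z hz y
        obtain ⟨u, hu, v, hv, rfl⟩ := Submodule.mem_sup.mp hz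
        obtain ⟨t, rfl⟩ := Submodule.mem_span_singleton.mp hv
        rw [add_lie, central_lie_zero' hT hu y, smul_lie, had y, smul_zero, add_zero]
      have hZ2ker : Z2 ≤ LinearMap.ker (LieAlgebra.ad k L w) := by
        apply sup_le
        · intro z hz
          rw [LinearMap.mem_ker]
          have h1 : ⁅z, w⁆ = 0 := hZ1c z hz w
          simp only [LieAlgebra.ad_apply]
          rw [← lie_skew, h1, neg_zero]
        · rw [Submodule.span_le]
          rintro _ rfl
          rw [SetLike.mem_coe, LinearMap.mem_ker]
          simp only [LieAlgebra.ad_apply]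
          rw [lie_self]
      have hφaZ1 : φ a ∈ Z1 := Submodule.mem_sup_right (Submodule.subset_span rfl)
      have h01 : Z0 < Z1 := lt_of_le_of_ne le_sup_left (by
        intro heq
        apply hnotD
        have h9 := hφaZ1
        rw [← heq] at h9
        exact h9)
      have hwZ2 : w ∈ Z2 := Submodule.mem_sup_right (Submodule.subset_span rfl)
      have h12 : Z1 < Z2 := lt_of_le_of_ne le_sup_left (by
        intro heq
        obtain ⟨y, hy⟩ := hwnc
        exact hy (hZ1c w (heq ▸ hwZ2) y))
      have ha1 := Submodule.finrank_lt_finrank_of_lt h01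
      have ha2 := Submodule.finrank_lt_finrank_of_lt h12
      have ha3 := Submodule.finrank_mono hZ2ker
      have hrank := LinearMap.finrank_range_add_finrank_ker (LieAlgebra.ad k L w)
      have hLle : finrank k L ≤ n + finrank k Z0 := by
        have h1 := span_sup_derived (↑s : Set L) hspan
        have h2eq := Submodule.finrank_sup_add_finrank_inf_eq
          (Submodule.span k (↑s : Set L)) Z0
        have h3 : finrank k (Submodule.span k (↑s : Set L)) ≤ n := by
          have h4 := finrank_span_finset_le_card (R := k) s
          simpa [Set.finrank, hcard] using h4
        have h5 : Submodule.span k (↑s : Set L) ⊔ Z0 = ⊤ := by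
          rw [hZ0]; exact h1
        have h6 : finrank k ↥(Submodule.span k (↑s : Set L) ⊔ Z0) = finrank k L := by
          rw [h5]
          exact finrank_top k L
        omega
      rw [breadth] at hw
      omega
    · by_contra hne0
      have hbp := breadth_phi φ hsurj a
      rw [hm'] at hbp
      have hker1 : finrank k (LinearMap.ker (Fintype.linearCombination k
          (fun i => φ ⁅a, gen k 2 n i⁆))) = 1 := by omega
      have hpaker : piF a ∈ LinearMap.ker (Fintype.linearCombination k
          (fun i => φ ⁅a, gen k 2 n i⁆)) := by
        rw [LinearMap.mem_ker, psi_apply, lie_sum_piF, map_zero φ]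
      have hpbker : piF b ∈ LinearMap.ker (Fintype.linearCombination k
          (fun i => φ ⁅a, gen k 2 n i⁆)) := by
        rw [LinearMap.mem_ker, psi_apply]
        have hd := sub_sum_mem_derived b
        have hsum2 : ⁅a, ∑ i, piF b i • gen k 2 n i⁆ = ⁅a, b⁆ := by
          have h1 : (∑ i, piF b i • gen k 2 n i) =
              b - (b - ∑ i, piF b i • gen k 2 n i) := by abel
          rw [h1]
          have h2 := map_sub (LieAlgebra.ad k (FreeNilp k 2 n) a) b
            (b - ∑ i, piF b i • gen k 2 n i)
          simp only [LieAlgebra.ad_apply] at h2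
          rw [h2, derived_central hd a, sub_zero]
        rw [hsum2]
        exact LieHom.mem_ker.mp hab
      have hpb0 : piF b ≠ 0 := fun hpb =>
        hne0 (central_lie_zero hTF ((mem_derived_iff_piF_eq_zero b).mpr hpb) a)
      have hpbnot : piF b ∉ Submodule.span k {piF a} := by
        intro hmem3
        obtain ⟨t, ht⟩ := Submodule.mem_span_singleton.mp hmem3
        have hbd : b - t • a ∈ derivedIdeal k (FreeNilp k 2 n) := by
          rw [mem_derived_iff_piF_eq_zero, map_sub, map_smul, ← ht, sub_self]
        apply hne0
        have h1 : b = (b - t • a) + t • a := by abel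
        have h2 := map_add (LieAlgebra.ad k (FreeNilp k 2 n) a) (b - t • a) (t • a)
        simp only [LieAlgebra.ad_apply] at h2
        have h3 := map_smul (LieAlgebra.ad k (FreeNilp k 2 n) a) t a
        simp only [LieAlgebra.ad_apply] at h3
        rw [h1, h2, derived_central hbd a, h3, lie_self, smul_zero, add_zero]
      have hchain : Submodule.span k {piF a} <
          Submodule.span k {piF a} ⊔ Submodule.span k {piF b} :=
        lt_of_le_of_ne le_sup_left (by
          intro heq
          exact hpbnot (heq ▸ Submodule.mem_sup_right (Submodule.subset_span rfl)))
      have hle2 : Submodule.span k {piF a} ⊔ Submodule.span k {piF b} ≤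
          LinearMap.ker (Fintype.linearCombination k (fun i => φ ⁅a, gen k 2 n i⁆)) := by
        apply sup_le
        · rw [Submodule.span_le]; rintro _ rfl; exact hpaker
        · rw [Submodule.span_le]; rintro _ rfl; exact hpbker
      have hf1 := Submodule.finrank_lt_finrank_of_lt hchain
      have hf2 := Submodule.finrank_mono hle2
      have hf3 : finrank k (Submodule.span k ({piF a} : Set (Fin n → k))) = 1 :=
        finrank_span_singleton hpa
      omega
  -- the isomorphism
  have hrange : φ.range = ⊤ := (LieHom.range_eq_top φ).mpr hsurj
  refine ⟨I, lt_of_le_of_ne hcen hne, hIbr, ?_⟩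
  have e1 : φ.range ≃ₗ⁅k⁆ (⊤ : LieSubalgebra k L) := LieEquiv.ofEq _ _ (by rw [hrange])
  exact ⟨(φ.quotKerEquivRange.trans (e1.trans LieSubalgebra.topEquiv)).symm⟩

end Forward

/-- a 2-step nilpotent Lie algebra minimally generated by `m+1` elements has
breadth type `(0, m)` iff it is isomorphic to `ℒ_m/I` for some proper central ideal
`I ⊊ Z(ℒ_m)` containing no nonzero Lie bracket. -/
theorem breadth_type_zero_m_iff_quotient
    (k : Type*) [Field k] (L : Type*) [LieRing L] [LieAlgebra k L] [FiniteDimensional k L]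
    (m : ℕ) (hm : 1 ≤ m)
    (h2 : IsNilpotentOfClass k L 2) (hmin : MinimallyGenerated k L (m+1)) :
    HasBreadthType k L {0, m} ↔
      ∃ I : LieIdeal k (FreeNilp k 2 (m+1)),
        I < LieAlgebra.center k (FreeNilp k 2 (m+1)) ∧
        (∀ a b : FreeNilp k 2 (m+1), ⁅a, b⁆ ∈ I → ⁅a, b⁆ = 0) ∧
        Nonempty (L ≃ₗ⁅k⁆ (FreeNilp k 2 (m+1) ⧸ I)) := by
  constructor
  · intro h
    exact exists_ideal_of_hasBreadthType L m hm h2 hmin h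
  · rintro ⟨I, hIlt, hIbr, ⟨e⟩⟩
    exact hasBreadthType_of_quotient m I hIbr e
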